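/- Let β be a positive even integer, N a positive integer, and α a complex number with Im(α) ≠ 0 and 2·Re(α) not an integer, and let ᾱ denote the complex conjugate of α. Then (-1)^{βN(N-1)/4} π^N M_N(α, ᾱ, β/2) = (- sin(πα) sin(πᾱ) / sin(π(α+ᾱ)))^N · S_N(-β(N-1)/2 - 1 - α, -β(N-1)/2 - 1 - ᾱ, β/2). -/

import Mathlib

open Real Complex Finset

lemma refl_aux (n : ℕ) (s : ℂ) (hs : Complex.sin (π*s) ≠ 0)
    (hG : Complex.Gamma (1+(n:ℂ)+s) ≠ 0) :
    Complex.Gamma (-(n:ℂ) - s)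
      = π / ((-1:ℂ)^(n+1) * Complex.sin (π*s) * Complex.Gamma (1+(n:ℂ)+s)) := by
  have h := Complex.Gamma_mul_Gamma_one_sub (-(n:ℂ) - s)
  rw [show (1:ℂ) - (-(n:ℂ)-s) = 1+(n:ℂ)+s by ring] at h
  have h2 : Complex.sin ((π:ℂ) * (-(n:ℂ)-s)) = (-1:ℂ)^(n+1) * Complex.sin (π*s) := by
    rw [show (π:ℂ) * (-(n:ℂ)-s) = -((π:ℂ)*s + (n:ℂ)*π) by ring, Complex.sin_neg,
      Complex.sin_add]
    rw [show ((n:ℂ)*(π:ℂ)) = ((n*π : ℝ):ℂ) by push_cast; ring, ← Complex.ofReal_sin,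
      ← Complex.ofReal_cos, Real.sin_nat_mul_pi]
    have hc := Real.cos_nat_mul_pi_sub 0 n
    simp only [sub_zero, Real.cos_zero, mul_one] at hc
    rw [hc]
    push_cast
    ring
  rw [h2] at h
  have hc0 : ((-1:ℂ)^(n+1) * Complex.sin (π*s)) ≠ 0 :=
    mul_ne_zero (pow_ne_zero _ (by norm_num)) hs
  rw [eq_div_iff hc0] at h
  rw [eq_div_iff (mul_ne_zero hc0 hG)]
  linear_combination h


/-- `M_N(a,b,λ)` from the paper, with complex Gamma functions. -/
noncomputable def MN (N : ℕ) (a b lam : ℂ) : ℂ :=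
  ∏ j ∈ Finset.range N,
    Complex.Gamma (lam*j + a + b + 1) * Complex.Gamma (lam*(j+1) + 1) /
      (Complex.Gamma (lam*j + a + 1) * Complex.Gamma (lam*j + b + 1) *
        Complex.Gamma (1 + lam))

/-- `S_N(a,b,λ)` from the paper, with complex Gamma functions. -/
noncomputable def SN (N : ℕ) (a b lam : ℂ) : ℂ :=
  ∏ j ∈ Finset.range N,
    Complex.Gamma (a + 1 + lam*j) * Complex.Gamma (b + 1 + lam*j) *
      Complex.Gamma (1 + lam*(j+1)) /
      (Complex.Gamma (a + b + 2 + lam*((N:ℂ) + j - 1)) * Complex.Gamma (1 + lam))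

theorem statement4 (β N : ℕ) (hβ : 0 < β) (hβe : Even β) (hN : 0 < N) (α : ℂ)
    (hIm : α.im ≠ 0) (hRe : ∀ m : ℤ, 2*α.re ≠ (m : ℝ)) :
    (-1:ℂ)^(β*N*(N-1)/4) * (π:ℂ)^N * MN N α (starRingEnd ℂ α) ((β:ℂ)/2) =
      (-(Complex.sin (π*α) * Complex.sin (π*(starRingEnd ℂ α)) /
          Complex.sin (π*(α + starRingEnd ℂ α))))^N *
        SN N (-(β:ℂ)*((N:ℂ)-1)/2 - 1 - α)
          (-(β:ℂ)*((N:ℂ)-1)/2 - 1 - starRingEnd ℂ α) ((β:ℂ)/2) := by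
  obtain ⟨m, hm⟩ := hβe
  subst hm
  have hπ : (π:ℂ) ≠ 0 := Complex.ofReal_ne_zero.mpr Real.pi_ne_zero
  -- nonvanishing of the sines
  have hsa : Complex.sin ((π:ℂ)*α) ≠ 0 := by
    rw [ne_eq, Complex.sin_eq_zero_iff]
    rintro ⟨k, hk⟩
    have hαk : α = (k:ℂ) := by
      exact mul_left_cancel₀ hπ (hk.trans (by ring))
    apply hIm; rw [hαk]; simp
  have hsb : Complex.sin ((π:ℂ)*(starRingEnd ℂ α)) ≠ 0 := by
    rw [ne_eq, Complex.sin_eq_zero_iff]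
    rintro ⟨k, hk⟩
    have hαk : starRingEnd ℂ α = (k:ℂ) := by
      exact mul_left_cancel₀ hπ (hk.trans (by ring))
    apply hIm
    have := congrArg Complex.im hαk
    simp at this
    simpa using this
  have hss : Complex.sin ((π:ℂ)*(α + starRingEnd ℂ α)) ≠ 0 := by
    rw [ne_eq, Complex.sin_eq_zero_iff]
    rintro ⟨k, hk⟩
    have hαk : α + starRingEnd ℂ α = (k:ℂ) := by
      exact mul_left_cancel₀ hπ (hk.trans (by ring))
    rw [Complex.add_conj] at hαk
    apply hRe k
    exact_mod_cast congrArg Complex.re hαk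
  -- nonvanishing of the Gammas
  have hGim : ∀ z : ℂ, z.im ≠ 0 → Complex.Gamma z ≠ 0 := fun z hz =>
    Complex.Gamma_ne_zero fun n h => hz (by rw [h]; simp)
  have hGa : ∀ k : ℕ, Complex.Gamma (1+(k:ℂ)+α) ≠ 0 := fun k => hGim _ (by simp [hIm])
  have hGb : ∀ k : ℕ, Complex.Gamma (1+(k:ℂ)+(starRingEnd ℂ α)) ≠ 0 := fun k =>
    hGim _ (by simp [hIm])
  have hGs : ∀ k : ℕ, Complex.Gamma (1+(k:ℂ)+(α + starRingEnd ℂ α)) ≠ 0 := fun k =>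
    Complex.Gamma_ne_zero fun n h => by
      have h' := congrArg Complex.re h
      simp [Complex.add_re, Complex.conj_re] at h'
      apply hRe (-(n:ℤ) - 1 - k)
      push_cast
      linarith

  -- unfold and normalize lambda
  have hl : ((m+m:ℕ):ℂ)/2 = (m:ℂ) := by push_cast; ring
  simp only [MN, SN]
  simp only [hl]
  set b := starRingEnd ℂ α with hb
  set aP := -((m+m:ℕ):ℂ)*((N:ℂ)-1)/2 - 1 - α with haP
  set bP := -((m+m:ℕ):ℂ)*((N:ℂ)-1)/2 - 1 - b with hbP
  -- the exponent computation
  have h2 := Finset.sum_range_id_mul_two N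
  have hE : (m+m)*N*(N-1)/4 = ∑ j ∈ range N, m*j := by
    rw [← Finset.mul_sum]
    have h3 : (m+m)*N*(N-1) = m * (∑ i ∈ range N, i) * 4 := by
      rw [mul_assoc, ← h2]; ring
    rw [h3]
    exact Nat.mul_div_cancel _ (by norm_num)
  have hconst : ((-1:ℂ))^((m+m)*N*(N-1)/4) * (π:ℂ)^N
      = ∏ j ∈ range N, ((-1:ℂ)^(m*j) * (π:ℂ)) := by
    rw [Finset.prod_mul_distrib, Finset.prod_const, Finset.card_range,
      Finset.prod_pow_eq_pow_sum, hE]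
  -- splitting the products
  have hMsplit : (∏ j ∈ range N, (Complex.Gamma ((m:ℂ)*j + α + b + 1)
        * Complex.Gamma ((m:ℂ)*(j+1) + 1) /
      (Complex.Gamma ((m:ℂ)*j + α + 1) * Complex.Gamma ((m:ℂ)*j + b + 1)
        * Complex.Gamma (1 + (m:ℂ)))))
    = (∏ j ∈ range N, (Complex.Gamma ((m:ℂ)*j + α + b + 1) /
        (Complex.Gamma ((m:ℂ)*j + α + 1) * Complex.Gamma ((m:ℂ)*j + b + 1))))
      * ∏ j ∈ range N, (Complex.Gamma ((m:ℂ)*(j+1) + 1) / Complex.Gamma (1 + (m:ℂ))) := by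
    rw [← Finset.prod_mul_distrib]
    exact Finset.prod_congr rfl fun j _ => by ring
  have hSsplit : (∏ j ∈ range N, (Complex.Gamma (aP + 1 + (m:ℂ)*j)
        * Complex.Gamma (bP + 1 + (m:ℂ)*j) * Complex.Gamma (1 + (m:ℂ)*(j+1)) /
      (Complex.Gamma (aP + bP + 2 + (m:ℂ)*((N:ℂ) + j - 1)) * Complex.Gamma (1 + (m:ℂ)))))
    = (∏ j ∈ range N, (Complex.Gamma (aP + 1 + (m:ℂ)*j) * Complex.Gamma (bP + 1 + (m:ℂ)*j)
        / Complex.Gamma (aP + bP + 2 + (m:ℂ)*((N:ℂ) + j - 1))))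
      * ∏ j ∈ range N, (Complex.Gamma (1 + (m:ℂ)*(j+1)) / Complex.Gamma (1 + (m:ℂ))) := by
    rw [← Finset.prod_mul_distrib]
    exact Finset.prod_congr rfl fun j _ => by ring
  have hYY : (∏ j ∈ range N, (Complex.Gamma ((m:ℂ)*(j+1) + 1) / Complex.Gamma (1 + (m:ℂ))))
      = ∏ j ∈ range N, (Complex.Gamma (1 + (m:ℂ)*(j+1)) / Complex.Gamma (1 + (m:ℂ))) :=
    Finset.prod_congr rfl fun j _ => by rw [show (m:ℂ)*(j+1) + 1 = 1 + (m:ℂ)*(j+1) by ring]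
  -- the key termwise identity
  have key : (∏ j ∈ range N, ((-1:ℂ)^(m*j) * (π:ℂ) * (Complex.Gamma ((m:ℂ)*j + α + b + 1) /
        (Complex.Gamma ((m:ℂ)*j + α + 1) * Complex.Gamma ((m:ℂ)*j + b + 1)))))
      = ∏ j ∈ range N, ((-(Complex.sin ((π:ℂ)*α) * Complex.sin ((π:ℂ)*b) /
          Complex.sin ((π:ℂ)*(α + b)))) *
        (Complex.Gamma (aP + 1 + (m:ℂ)*j) * Complex.Gamma (bP + 1 + (m:ℂ)*j) /
          Complex.Gamma (aP + bP + 2 + (m:ℂ)*((N:ℂ) + j - 1)))) := by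
    conv_rhs => rw [← Finset.prod_range_reflect]
    refine Finset.prod_congr rfl fun j hj => ?_
    have hjN : j < N := Finset.mem_range.mp hj
    have hcast : ((N-1-j : ℕ):ℂ) = (N:ℂ) - 1 - (j:ℂ) := by
      have h1 : N-1-j = N-(1+j) := by omega
      rw [h1, Nat.cast_sub (by omega : 1+j ≤ N)]
      push_cast; ring
    rw [show aP + 1 + (m:ℂ)*((N-1-j:ℕ):ℂ) = -((m*j:ℕ):ℂ) - α by
        rw [haP, hcast]; push_cast; ring]
    rw [show bP + 1 + (m:ℂ)*((N-1-j:ℕ):ℂ) = -((m*j:ℕ):ℂ) - b by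
        rw [hbP, hcast]; push_cast; ring]
    rw [show aP + bP + 2 + (m:ℂ)*((N:ℂ) + ((N-1-j:ℕ):ℂ) - 1) = -((m*j:ℕ):ℂ) - (α + b) by
        rw [haP, hbP, hcast]; push_cast; ring]
    rw [refl_aux (m*j) α hsa (hGa (m*j)), refl_aux (m*j) b hsb (hGb (m*j)),
      refl_aux (m*j) (α + b) hss (hGs (m*j))]
    rw [show (m:ℂ)*j + α + b + 1 = 1 + ((m*j:ℕ):ℂ) + (α + b) by push_cast; ring]
    rw [show (m:ℂ)*j + α + 1 = 1 + ((m*j:ℕ):ℂ) + α by push_cast; ring]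
    rw [show (m:ℂ)*j + b + 1 = 1 + ((m*j:ℕ):ℂ) + b by push_cast; ring]
    have hGa' := hGa (m*j)
    have hGb' := hGb (m*j)
    have hGs' := hGs (m*j)
    set sa := Complex.sin ((π:ℂ)*α) with hsadef
    set sb := Complex.sin ((π:ℂ)*b) with hsbdef
    set ss := Complex.sin ((π:ℂ)*(α+b)) with hssdef
    set Ga := Complex.Gamma (1 + ((m*j:ℕ):ℂ) + α) with hGadef
    set Gb := Complex.Gamma (1 + ((m*j:ℕ):ℂ) + b) with hGbdef
    set Gs := Complex.Gamma (1 + ((m*j:ℕ):ℂ) + (α+b)) with hGsdef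
    clear_value sa sb ss Ga Gb Gs
    rcases Nat.even_or_odd (m*j) with he | ho
    · rw [he.neg_one_pow, Odd.neg_one_pow he.add_one]
      field_simp [hsa, hsb, hss, hGa', hGb', hGs', hπ]
    · rw [ho.neg_one_pow, Even.neg_one_pow ho.add_one]
      field_simp [hsa, hsb, hss, hGa', hGb', hGs', hπ]
  -- assembly
  have lhs_eq : ((-1:ℂ))^((m+m)*N*(N-1)/4) * (π:ℂ)^N *
      (∏ j ∈ range N, (Complex.Gamma ((m:ℂ)*j + α + b + 1)
        * Complex.Gamma ((m:ℂ)*(j+1) + 1) /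
      (Complex.Gamma ((m:ℂ)*j + α + 1) * Complex.Gamma ((m:ℂ)*j + b + 1)
        * Complex.Gamma (1 + (m:ℂ)))))
      = (∏ j ∈ range N, ((-1:ℂ)^(m*j) * (π:ℂ) * (Complex.Gamma ((m:ℂ)*j + α + b + 1) /
        (Complex.Gamma ((m:ℂ)*j + α + 1) * Complex.Gamma ((m:ℂ)*j + b + 1)))))
      * ∏ j ∈ range N, (Complex.Gamma ((m:ℂ)*(j+1) + 1) / Complex.Gamma (1 + (m:ℂ))) := by
    rw [hconst, hMsplit]
    simp only [Finset.prod_mul_distrib]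
    ring
  have rhs_eq : (-(Complex.sin ((π:ℂ)*α) * Complex.sin ((π:ℂ)*b) /
          Complex.sin ((π:ℂ)*(α + b))))^N *
      (∏ j ∈ range N, (Complex.Gamma (aP + 1 + (m:ℂ)*j)
        * Complex.Gamma (bP + 1 + (m:ℂ)*j) * Complex.Gamma (1 + (m:ℂ)*(j+1)) /
      (Complex.Gamma (aP + bP + 2 + (m:ℂ)*((N:ℂ) + j - 1)) * Complex.Gamma (1 + (m:ℂ)))))
      = (∏ j ∈ range N, ((-(Complex.sin ((π:ℂ)*α) * Complex.sin ((π:ℂ)*b) /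
          Complex.sin ((π:ℂ)*(α + b)))) *
        (Complex.Gamma (aP + 1 + (m:ℂ)*j) * Complex.Gamma (bP + 1 + (m:ℂ)*j) /
          Complex.Gamma (aP + bP + 2 + (m:ℂ)*((N:ℂ) + j - 1)))))
      * ∏ j ∈ range N, (Complex.Gamma (1 + (m:ℂ)*(j+1)) / Complex.Gamma (1 + (m:ℂ))) := by
    rw [hSsplit]
    simp only [Finset.prod_mul_distrib, Finset.prod_const, Finset.card_range]
    ring
  rw [lhs_eq, rhs_eq, key, hYY]
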